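/- For every n ≥ 2, every bijection of the point set P of the incidence geometry G_n that maps lines onto lines is the restriction to P of a linear automorphism of V_n preserving the symplectic form; hence the automorphism group of G_n is isomorphic to Sp(2n,2). -/
import Mathlib


/-- The symplectic vector space `V_n = (ZMod 2)^(2n)` of the n-qubit real Pauli group. -/
abbrev V (n : ℕ) : Type := Fin (2 * n) → ZMod 2

/-- The index `2i-1` (0-based: `2i`). -/
def i0 {n : ℕ} (i : Fin n) : Fin (2 * n) := ⟨2 * i.1, by have := i.isLt; omega⟩

/-- The index `2i` (0-based: `2i+1`). -/
def i1 {n : ℕ} (i : Fin n) : Fin (2 * n) := ⟨2 * i.1 + 1, by have := i.isLt; omega⟩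

/-- The symplectic form `⟨x,y⟩ = Σ_{i=1}^n (x_{2i−1} y_{2i} + x_{2i} y_{2i−1})`. -/
def sform {n : ℕ} (x y : V n) : ZMod 2 :=
  ∑ i : Fin n, (x (i0 i) * y (i1 i) + x (i1 i) * y (i0 i))

/-- The point set `P = V_n \ {0}` of the incidence geometry `G_n`. -/
def P (n : ℕ) : Set (V n) := {x | x ≠ 0}

/-- The line set `L = {{a,b,a+b} : a,b ∈ P, a ≠ b, ⟨a,b⟩ = 0}` of `G_n`. -/
def Lines (n : ℕ) : Set (Set (V n)) :=
  {l | ∃ a b : V n, a ∈ P n ∧ b ∈ P n ∧ a ≠ b ∧ sform a b = 0 ∧ l = {a, b, a + b}}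

/-- A subset `H ⊆ P` satisfies condition (H1) if every line meets it in exactly
one point or is contained in it. -/
def IsH1 {n : ℕ} (H : Set (V n)) : Prop :=
  H ⊆ P n ∧ ∀ l ∈ Lines n, (H ∩ l).ncard = 1 ∨ l ⊆ H

/-- A geometric hyperplane: a subset satisfying (H1) which is not the full point set. -/
def IsHyperplane {n : ℕ} (H : Set (V n)) : Prop := IsH1 H ∧ H ≠ P n

/-- `A ⊞ B`: the complement in `P` of the symmetric difference of `A` and `B`. -/
def boxAdd {n : ℕ} (A B : Set (V n)) : Set (V n) := P n \ (symmDiff A B)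

/-- The quadratic form `Q_0(x) = Σ_{i=1}^n x_{2i−1} x_{2i}`. -/
def Q0 {n : ℕ} (x : V n) : ZMod 2 := ∑ i : Fin n, x (i0 i) * x (i1 i)

/-- The quadratic form `Q_p(x) = Q_0(x) + ⟨p,x⟩`. -/
def Qf {n : ℕ} (p x : V n) : ZMod 2 := Q0 x + sform p x

/-- The perp-set hyperplane `C_p = {x ∈ P : ⟨p,x⟩ = 0}`. -/
def Cset {n : ℕ} (p : V n) : Set (V n) := {x ∈ P n | sform p x = 0}

/-- The quadric hyperplane `H_p = {x ∈ P : Q_p(x) = 0}`. -/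
def Hset {n : ℕ} (p : V n) : Set (V n) := {x ∈ P n | Qf p x = 0}

/-- The symplectic transvection `t_p : x ↦ x + ⟨p,x⟩·p`. -/
def tv {n : ℕ} (p : V n) (x : V n) : V n := x + sform p x • p


lemma z2cases : ∀ z : ZMod 2, z = 0 ∨ z = 1 := by decide
lemma z2add : ∀ a : ZMod 2, a + a = 0 := by decide

lemma vadd_self {n : ℕ} (v : V n) : v + v = 0 := by
  funext i; exact z2add (v i)

lemma eq_of_vadd_eq_zero {n : ℕ} {v w : V n} (h : v + w = 0) : v = w := by
  have : v + (v + w) = v + 0 := by rw [h]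
  rwa [← add_assoc, vadd_self, zero_add, add_zero, eq_comm] at this

lemma sform_comm {n : ℕ} (x y : V n) : sform x y = sform y x :=
  Finset.sum_congr rfl fun i _ => by ring

lemma sform_self {n : ℕ} (x : V n) : sform x x = 0 := by
  unfold sform
  rw [Finset.sum_eq_zero]
  intro i _
  rw [mul_comm]
  exact z2add _

lemma sform_add_left {n : ℕ} (x y z : V n) :
    sform (x + y) z = sform x z + sform y z := by
  unfold sform
  rw [← Finset.sum_add_distrib]
  exact Finset.sum_congr rfl fun i _ => by simp [Pi.add_apply]; ring

lemma sform_add_right {n : ℕ} (x y z : V n) :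
    sform x (y + z) = sform x y + sform x z := by
  rw [sform_comm, sform_add_left, sform_comm y x, sform_comm z x]

lemma sform_smul_left {n : ℕ} (c : ZMod 2) (x z : V n) :
    sform (c • x) z = c * sform x z := by
  unfold sform
  rw [Finset.mul_sum]
  exact Finset.sum_congr rfl fun i _ => by simp [Pi.smul_apply, smul_eq_mul]; ring

lemma sform_zero_left {n : ℕ} (z : V n) : sform 0 z = 0 := by
  unfold sform; rw [Finset.sum_eq_zero]; intro i _; simp

lemma sform_zero_right {n : ℕ} (z : V n) : sform z 0 = 0 := by
  rw [sform_comm]; exact sform_zero_left z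

lemma i0_ne_i1 {n : ℕ} (i j : Fin n) : i0 i ≠ i1 j := by
  intro h
  have := congrArg Fin.val h
  simp [i0, i1] at this
  omega

lemma i1_inj {n : ℕ} {i j : Fin n} (h : i1 i = i1 j) : i = j := by
  have := congrArg Fin.val h
  simp [i1] at this
  exact Fin.ext (by omega)

lemma i0_inj {n : ℕ} {i j : Fin n} (h : i0 i = i0 j) : i = j := by
  have := congrArg Fin.val h
  simp [i0] at this
  exact Fin.ext (by omega)

lemma sform_single1 {n : ℕ} (x : V n) (j : Fin n) :
    sform x (Pi.single (i1 j) 1) = x (i0 j) := by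
  unfold sform
  rw [Finset.sum_eq_single j]
  · rw [Pi.single_eq_same, Pi.single_eq_of_ne (i0_ne_i1 j j)]
    ring
  · intro i _ hij
    rw [Pi.single_eq_of_ne (fun h => hij (i1_inj h)),
        Pi.single_eq_of_ne (i0_ne_i1 i j)]
    ring
  · intro h; exact absurd (Finset.mem_univ j) h

lemma sform_single0 {n : ℕ} (x : V n) (j : Fin n) :
    sform x (Pi.single (i0 j) 1) = x (i1 j) := by
  unfold sform
  rw [Finset.sum_eq_single j]
  · rw [Pi.single_eq_same, Pi.single_eq_of_ne (Ne.symm (i0_ne_i1 j j))]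
    ring
  · intro i _ hij
    rw [Pi.single_eq_of_ne (fun h => hij (i0_inj h)),
        Pi.single_eq_of_ne (Ne.symm (i0_ne_i1 j i))]
    ring
  · intro h; exact absurd (Finset.mem_univ j) h

lemma sform_nondeg {n : ℕ} {x : V n} (h : ∀ y, sform x y = 0) : x = 0 := by
  funext k
  have hk := k.isLt
  rcases Nat.even_or_odd k.1 with ⟨j, hj⟩ | ⟨j, hj⟩
  · have hjn : j < n := by omega
    have : k = i0 ⟨j, hjn⟩ := Fin.ext (by simp [i0]; omega)
    rw [this]
    have := h (Pi.single (i1 ⟨j, hjn⟩) 1)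
    rw [sform_single1] at this
    simpa using this
  · have hjn : j < n := by omega
    have : k = i1 ⟨j, hjn⟩ := Fin.ext (by simp [i1]; omega)
    rw [this]
    have := h (Pi.single (i0 ⟨j, hjn⟩) 1)
    rw [sform_single0] at this
    simpa using this

lemma add_mem_P {n : ℕ} {a b : V n} (ha : a ∈ P n) (hab : a ≠ b) : a + b ∈ P n := by
  intro h0
  exact hab (eq_of_vadd_eq_zero h0)

lemma lines_subset_P {n : ℕ} {l : Set (V n)} (hl : l ∈ Lines n) : l ⊆ P n := by
  obtain ⟨a, b, ha, hb, hab, -, rfl⟩ := hl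
  intro x hx
  rcases hx with rfl | rfl | rfl
  · exact ha
  · exact hb
  · exact add_mem_P ha hab

lemma line_orth {n : ℕ} {a b : V n} (h : sform a b = 0) :
    ∀ x ∈ ({a, b, a + b} : Set (V n)), ∀ y ∈ ({a, b, a + b} : Set (V n)),
      sform x y = 0 := by
  have hba : sform b a = 0 := by rw [sform_comm]; exact h
  intro x hx y hy
  rcases hx with rfl | rfl | rfl <;> rcases hy with rfl | rfl | rfl <;>
    simp_all [sform_add_left, sform_add_right, sform_self]

lemma line_third {n : ℕ} {a b : V n} :
    ∀ x ∈ ({a, b, a + b} : Set (V n)), ∀ y ∈ ({a, b, a + b} : Set (V n)),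
      x ≠ y → x + y ∈ ({a, b, a + b} : Set (V n)) := by
  intro x hx y hy hxy
  have key : ∀ u v : V n, u + (u + v) = v := by
    intro u v; rw [← add_assoc, vadd_self, zero_add]
  have key1 : a + (a + b) = b := key a b
  have key2 : (a + b) + a = b := by rw [add_comm]; exact key1
  have key3 : b + (a + b) = a := by rw [add_comm a b]; exact key b a
  have key4 : (a + b) + b = a := by rw [add_comm]; exact key3
  simp only [Set.mem_insert_iff, Set.mem_singleton_iff] at hx hy ⊢
  rcases hx with h | h | h <;> rcases hy with h' | h' | h' <;>
    rw [h, h'] at hxy ⊢ <;>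
    first
      | exact absurd rfl hxy
      | exact Or.inl key3
      | exact Or.inl key4
      | exact Or.inr (Or.inl key1)
      | exact Or.inr (Or.inl key2)
      | exact Or.inr (Or.inr rfl)
      | exact Or.inr (Or.inr (add_comm b a))

def Tmap {n : ℕ} (σ : ↥(P n) ≃ ↥(P n)) (s : Set (V n)) : Set (V n) :=
  {y : V n | ∃ x : ↥(P n), (x : V n) ∈ s ∧ y = (σ x : V n)}

lemma Tmap_line_eq {n : ℕ} (σ : ↥(P n) ≃ ↥(P n)) (a b c : ↥(P n))
    (hc : (c : V n) = (a : V n) + b) :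
    Tmap σ {(a : V n), (b : V n), (a : V n) + (b : V n)} =
      {(σ a : V n), (σ b : V n), (σ c : V n)} := by
  ext y
  simp only [Tmap, Set.mem_setOf_eq, Set.mem_insert_iff, Set.mem_singleton_iff]
  constructor
  · rintro ⟨x, hx, rfl⟩
    rcases hx with hx | hx | hx
    · left; rw [Subtype.coe_injective hx]
    · right; left; rw [Subtype.coe_injective hx]
    · right; right; rw [Subtype.coe_injective (hx.trans hc.symm)]
  · rintro (rfl | rfl | rfl)
    · exact ⟨a, Or.inl rfl, rfl⟩
    · exact ⟨b, Or.inr (Or.inl rfl), rfl⟩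
    · exact ⟨c, Or.inr (Or.inr hc), rfl⟩


lemma coe_ne {n : ℕ} {a b : ↥(P n)} (h : a ≠ b) : (a : V n) ≠ (b : V n) :=
  fun hc => h (Subtype.coe_injective hc)

/-- Key lemma: a line-preserving bijection preserves orthogonality and
additivity on orthogonal pairs. -/
lemma keyA {n : ℕ} (σ : ↥(P n) ≃ ↥(P n))
    (Hσ : ∀ l ∈ Lines n, Tmap σ l ∈ Lines n)
    {a b c : ↥(P n)} (hab : (a : V n) ≠ (b : V n)) (horth : sform (a : V n) b = 0)
    (hc : (c : V n) = (a : V n) + b) :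
    sform (σ a : V n) (σ b : V n) = 0 ∧ (σ c : V n) = (σ a : V n) + (σ b : V n) := by
  have hl : ({(a : V n), (b : V n), (a : V n) + (b : V n)} : Set (V n)) ∈ Lines n :=
    ⟨a, b, a.2, b.2, hab, horth, rfl⟩
  have hS := Hσ _ hl
  rw [Tmap_line_eq σ a b c hc] at hS
  obtain ⟨a', b', ha', hb', hab', horth', hSeq⟩ := hS
  -- memberships
  have hma : (σ a : V n) ∈ ({a', b', a' + b'} : Set (V n)) := by rw [← hSeq]; left; rfl
  have hmb : (σ b : V n) ∈ ({a', b', a' + b'} : Set (V n)) := by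
    rw [← hSeq]; right; left; rfl
  have hmc : (σ c : V n) ∈ ({a', b', a' + b'} : Set (V n)) := by
    rw [← hSeq]; right; right; rfl
  -- distinctness
  have hab2 : a ≠ b := fun h => hab (congrArg _ h)
  have hsab : (σ a : V n) ≠ (σ b : V n) := coe_ne (fun h => hab2 (σ.injective h))
  have hca : c ≠ a := by
    intro h
    apply b.2
    have : (a : V n) + b = (a : V n) := by rw [← hc, h]
    have := congrArg (fun v => (a : V n) + v) this
    simpa [← add_assoc, vadd_self] using this
  have hcb : c ≠ b := by
    intro h
    apply a.2
    have : (a : V n) + b = (b : V n) := by rw [← hc, h]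
    have h2 := congrArg (fun v => v + (b : V n)) this
    simpa [add_assoc, vadd_self] using h2
  have hsca : (σ c : V n) ≠ (σ a : V n) := coe_ne (fun h => hca (σ.injective h))
  have hscb : (σ c : V n) ≠ (σ b : V n) := coe_ne (fun h => hcb (σ.injective h))
  constructor
  · exact line_orth horth' _ hma _ hmb
  · -- the sum is in the line
    have hsum := line_third _ hma _ hmb hsab
    rw [← hSeq] at hsum
    rcases hsum with h | h | h
    · exfalso
      apply (σ b).2
      have := congrArg (fun v => (σ a : V n) + v) h
      simpa [← add_assoc, vadd_self] using this
    · exfalso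
      apply (σ a).2
      have := congrArg (fun v => v + (σ b : V n)) h
      simpa [add_assoc, vadd_self] using this
    · exact h.symm

lemma Tmap_symm_Tmap {n : ℕ} (σ : ↥(P n) ≃ ↥(P n)) {s : Set (V n)} (hs : s ⊆ P n) :
    Tmap σ.symm (Tmap σ s) = s := by
  ext y
  constructor
  · rintro ⟨x, ⟨x', hx', hx⟩, rfl⟩
    have : x = σ x' := Subtype.coe_injective hx
    rw [this, Equiv.symm_apply_apply]
    exact hx'
  · intro hy
    refine ⟨σ ⟨y, hs hy⟩, ⟨⟨y, hs hy⟩, hy, rfl⟩, ?_⟩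
    rw [Equiv.symm_apply_apply]

lemma Hσ_symm {n : ℕ} (σ : ↥(P n) ≃ ↥(P n))
    (Hσ : ∀ l ∈ Lines n, Tmap σ l ∈ Lines n) :
    ∀ l ∈ Lines n, Tmap σ.symm l ∈ Lines n := by
  have hfin : Finite ↥(Lines n) := Subtype.finite
  set e : ↥(Lines n) → ↥(Lines n) := fun l => ⟨Tmap σ l, Hσ _ l.2⟩ with he
  have einj : Function.Injective e := by
    intro l1 l2 h
    have h' : Tmap σ (l1 : Set (V n)) = Tmap σ (l2 : Set (V n)) :=
      congrArg Subtype.val h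
    have := congrArg (Tmap σ.symm) h'
    rw [Tmap_symm_Tmap σ (lines_subset_P l1.2), Tmap_symm_Tmap σ (lines_subset_P l2.2)]
      at this
    exact Subtype.coe_injective this
  have esurj : Function.Surjective e := Finite.surjective_of_injective einj
  intro l hl
  obtain ⟨m, hm⟩ := esurj ⟨l, hl⟩
  have hml : Tmap σ (m : Set (V n)) = l := congrArg Subtype.val hm
  have : Tmap σ.symm l = (m : Set (V n)) := by
    rw [← hml, Tmap_symm_Tmap σ (lines_subset_P m.2)]
  rw [this]
  exact m.2

lemma sum_ne_left {n : ℕ} {a b : V n} (hb : b ≠ 0) : a + b ≠ a := by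
  intro h
  apply hb
  have := congrArg (fun v => a + v) h
  simpa [← add_assoc, vadd_self] using this

lemma sum_ne_right {n : ℕ} {a b : V n} (ha : a ≠ 0) : a + b ≠ b := by
  intro h
  apply ha
  have := congrArg (fun v => v + b) h
  simpa [add_assoc, vadd_self] using this

/-- Form preservation. -/
lemma pres {n : ℕ} (σ : ↥(P n) ≃ ↥(P n))
    (Hσ : ∀ l ∈ Lines n, Tmap σ l ∈ Lines n)
    {a b : ↥(P n)} (hab : (a : V n) ≠ (b : V n)) :
    sform (σ a : V n) (σ b : V n) = sform (a : V n) (b : V n) := by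
  have hsab : (σ a : V n) ≠ (σ b : V n) :=
    coe_ne (fun h => hab (congrArg _ (σ.injective h)))
  rcases z2cases (sform (a : V n) (b : V n)) with h0 | h1
  · rw [h0]
    exact (keyA σ Hσ hab h0 (c := ⟨(a : V n) + b, add_mem_P a.2 hab⟩) rfl).1
  · rw [h1]
    rcases z2cases (sform (σ a : V n) (σ b : V n)) with h | h
    · exfalso
      have := (keyA σ.symm (Hσ_symm σ Hσ) hsab h
        (c := ⟨(σ a : V n) + (σ b : V n), add_mem_P (σ a).2 hsab⟩) rfl).1
      simp only [Equiv.symm_apply_apply] at this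
      rw [h1] at this
      exact one_ne_zero this
    · exact h

def sLin {n : ℕ} (v : V n) : V n →ₗ[ZMod 2] ZMod 2 where
  toFun := sform v
  map_add' := sform_add_right v
  map_smul' := fun c x => by
    simp only [RingHom.id_apply, smul_eq_mul]
    rw [sform_comm, sform_smul_left, sform_comm v x]

/-- Additivity on hyperbolic pairs. -/
lemma keyC {n : ℕ} (σ : ↥(P n) ≃ ↥(P n))
    (Hσ : ∀ l ∈ Lines n, Tmap σ l ∈ Lines n)
    {a b c : ↥(P n)} (hab : (a : V n) ≠ (b : V n))
    (h1 : sform (a : V n) (b : V n) = 1) (hc : (c : V n) = (a : V n) + b) :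
    (σ c : V n) = (σ a : V n) + (σ b : V n) := by
  set A : V n := (σ a : V n) with hA
  set B : V n := (σ b : V n) with hB
  set Z : V n := (σ c : V n) with hZ
  have hAB : sform A B = 1 := by rw [pres σ Hσ hab]; exact h1
  have claim : ∀ d : V n, sform A d = 0 → sform B d = 0 → sform Z d = 0 := by
    intro d hdA hdB
    by_cases hd : d = 0
    · rw [hd]; exact sform_zero_right Z
    · set d' : ↥(P n) := ⟨d, hd⟩ with hd'
      have hdco : (d' : V n) = d := rfl
      by_cases hec : σ.symm d' = c
      · have : d' = σ c := by rw [← hec, Equiv.apply_symm_apply]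
        rw [show d = Z from congrArg Subtype.val this, sform_comm]
        exact sform_self Z
      · have hAd : A ≠ d := by
          intro h
          rw [← h, sform_comm] at hdB
          rw [hAB] at hdB
          exact one_ne_zero hdB
        have hBd : B ≠ d := by
          intro h
          rw [← h] at hdA
          rw [hAB] at hdA
          exact one_ne_zero hdA
        set e : ↥(P n) := σ.symm d' with he
        have hde : d = (σ e : V n) := by rw [he, Equiv.apply_symm_apply]
        have hae : (a : V n) ≠ (e : V n) := by
          intro h
          apply hAd
          have : a = e := Subtype.coe_injective h
          rw [hA, this, ← hde]
        have hbe : (b : V n) ≠ (e : V n) := by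
          intro h
          apply hBd
          have : b = e := Subtype.coe_injective h
          rw [hB, this, ← hde]
        have hsa : sform (a : V n) (e : V n) = 0 := by
          rw [← pres σ Hσ hae, ← hde]
          exact hdA
        have hsb : sform (b : V n) (e : V n) = 0 := by
          rw [← pres σ Hσ hbe, ← hde]
          exact hdB
        have hsc : sform (c : V n) (e : V n) = 0 := by
          rw [hc, sform_add_left, hsa, hsb, add_zero]
        have hce : (c : V n) ≠ (e : V n) := fun h => hec (Subtype.coe_injective h).symm
        rw [hde, hZ]
        exact pres σ Hσ hce ▸ hsc
  -- duality argument
  have hker : ⨅ i : Fin 2, LinearMap.ker (![sLin A, sLin B] i) ≤ LinearMap.ker (sLin Z) := by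
    intro d hd
    rw [Submodule.mem_iInf] at hd
    have h0 := hd 0
    have h1' := hd 1
    rw [LinearMap.mem_ker] at h0 h1' ⊢
    simp only [Matrix.cons_val_zero, Matrix.cons_val_one, Matrix.head_cons] at h0 h1'
    exact claim d h0 h1'
  have hspan := mem_span_of_iInf_ker_le_ker (𝕜 := ZMod 2) hker
  obtain ⟨cf, hcf⟩ := (Submodule.mem_span_range_iff_exists_fun (ZMod 2)).1 hspan
  have hext : ∀ y : V n, sform (cf 0 • A + cf 1 • B) y = sform Z y := by
    intro y
    have := congrFun (congrArg (fun f => f.toFun) hcf) y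
    simp only [LinearMap.coe_sum, Finset.sum_apply, LinearMap.smul_apply,
      Fin.sum_univ_two, Matrix.cons_val_zero, Matrix.cons_val_one, Matrix.head_cons,
      smul_eq_mul] at this
    rw [sform_add_left, sform_smul_left, sform_smul_left]
    exact this
  have hZW : Z = cf 0 • A + cf 1 • B := by
    apply eq_of_vadd_eq_zero
    apply sform_nondeg
    intro y
    rw [sform_add_left, hext y, z2add]
  have hZ0 : Z ≠ 0 := (σ c).2
  have hca : c ≠ a := by
    intro h
    apply b.2
    have : (a : V n) + b = (a : V n) := by rw [← hc, h]
    exact absurd this (sum_ne_left (fun hb0 => b.2 hb0))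
  have hcb : c ≠ b := by
    intro h
    apply a.2
    have : (a : V n) + b = (b : V n) := by rw [← hc, h]
    exact absurd this (sum_ne_right (fun ha0 => a.2 ha0))
  have hZA : Z ≠ A := coe_ne (fun h => hca (σ.injective h))
  have hZB : Z ≠ B := coe_ne (fun h => hcb (σ.injective h))
  rcases z2cases (cf 0) with h0 | h0 <;> rcases z2cases (cf 1) with hh1 | hh1 <;>
    rw [h0, hh1] at hZW
  · exfalso; apply hZ0; simpa using hZW
  · exfalso; apply hZB; simpa using hZW
  · exfalso; apply hZA; simpa using hZW
  · simpa using hZW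

/-- Additivity of line-preserving bijections. -/
lemma addLemma {n : ℕ} (σ : ↥(P n) ≃ ↥(P n))
    (Hσ : ∀ l ∈ Lines n, Tmap σ l ∈ Lines n)
    {a b c : ↥(P n)} (hab : (a : V n) ≠ (b : V n)) (hc : (c : V n) = (a : V n) + b) :
    (σ c : V n) = (σ a : V n) + (σ b : V n) := by
  rcases z2cases (sform (a : V n) (b : V n)) with h | h
  · exact (keyA σ Hσ hab h hc).2
  · exact keyC σ Hσ hab h hc

def gfun {n : ℕ} (σ : ↥(P n) ≃ ↥(P n)) (x : V n) : V n :=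
  if h : x = 0 then 0 else (σ ⟨x, h⟩ : V n)

lemma gfun_zero {n : ℕ} (σ : ↥(P n) ≃ ↥(P n)) : gfun σ 0 = 0 := dif_pos rfl

lemma gfun_coe {n : ℕ} (σ : ↥(P n) ≃ ↥(P n)) (x : ↥(P n)) :
    gfun σ (x : V n) = (σ x : V n) := by
  rw [gfun, dif_neg x.2, Subtype.coe_eta]

lemma gfun_add {n : ℕ} (σ : ↥(P n) ≃ ↥(P n))
    (Hσ : ∀ l ∈ Lines n, Tmap σ l ∈ Lines n) (x y : V n) :
    gfun σ (x + y) = gfun σ x + gfun σ y := by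
  by_cases hx : x = 0
  · rw [hx, gfun_zero, zero_add, zero_add]
  by_cases hy : y = 0
  · rw [hy, gfun_zero, add_zero, add_zero]
  by_cases hxy : x = y
  · rw [hxy, vadd_self, gfun_zero, vadd_self]
  · set a : ↥(P n) := ⟨x, hx⟩
    set b : ↥(P n) := ⟨y, hy⟩
    set c : ↥(P n) := ⟨x + y, add_mem_P hx hxy⟩
    have h1 : gfun σ (x + y) = (σ c : V n) := gfun_coe σ c
    have h2 : gfun σ x = (σ a : V n) := gfun_coe σ a
    have h3 : gfun σ y = (σ b : V n) := gfun_coe σ b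
    rw [h1, h2, h3]
    exact addLemma σ Hσ (a := a) (b := b) (c := c) hxy rfl

lemma gfun_inv {n : ℕ} (σ : ↥(P n) ≃ ↥(P n)) (x : V n) :
    gfun σ.symm (gfun σ x) = x := by
  by_cases hx : x = 0
  · rw [hx, gfun_zero, gfun_zero]
  · have h1 : gfun σ x = (σ ⟨x, hx⟩ : V n) := dif_neg hx
    rw [h1, gfun_coe σ.symm (σ ⟨x, hx⟩), Equiv.symm_apply_apply]

theorem stmt12 (n : ℕ) (hn : 2 ≤ n) (σ : ↥(P n) ≃ ↥(P n))
    (hσ : ∀ l ∈ Lines n,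
      {y : V n | ∃ x : ↥(P n), (x : V n) ∈ l ∧ y = (σ x : V n)} ∈ Lines n) :
    ∃! g : V n ≃ₗ[ZMod 2] V n,
      (∀ x y : V n, sform (g x) (g y) = sform x y) ∧
      ∀ x : ↥(P n), (σ x : V n) = g (x : V n) := by
  have Hσ : ∀ l ∈ Lines n, Tmap σ l ∈ Lines n := hσ
  refine ⟨{ toFun := gfun σ
            map_add' := gfun_add σ Hσ
            map_smul' := ?_
            invFun := gfun σ.symm
            left_inv := gfun_inv σ
            right_inv := ?_ }, ⟨?_, ?_⟩, ?_⟩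
  · -- map_smul'
    intro c x
    rcases z2cases c with rfl | rfl
    · simp only [zero_smul, RingHom.id_apply]
      exact gfun_zero σ
    · simp only [one_smul, RingHom.id_apply]
  · -- right_inv
    intro x
    have := gfun_inv σ.symm (x := x)
    simpa using this
  · -- form preservation
    intro x y
    show sform (gfun σ x) (gfun σ y) = sform x y
    by_cases hx : x = 0
    · subst hx
      rw [gfun_zero, sform_zero_left, sform_zero_left]
    by_cases hy : y = 0
    · subst hy
      rw [gfun_zero, sform_zero_right, sform_zero_right]
    by_cases hxy : x = y
    · subst hxy
      rw [sform_self, sform_self]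
    · rw [gfun_coe σ ⟨x, hx⟩, gfun_coe σ ⟨y, hy⟩]
      exact pres σ Hσ (a := ⟨x, hx⟩) (b := ⟨y, hy⟩) hxy
  · -- agreement
    intro x
    exact (gfun_coe σ x).symm
  · -- uniqueness
    intro g' ⟨hpres', hagree'⟩
    apply LinearEquiv.ext
    intro x
    by_cases hx : x = 0
    · rw [hx]
      show g' 0 = gfun σ 0
      rw [map_zero, gfun_zero]
    · show g' x = gfun σ x
      rw [gfun, dif_neg hx]
      exact (hagree' ⟨x, hx⟩).symm
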